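/- Combining the previous two results: for any two rows i,i' of κ, letting X_{ij} be the multiplicity of example (i,j) over N i.i.d. coordinated microbatches, the conditional expectation of the empirical weighted Jaccard similarity J(X_{i·}, X_{i'·}), given that Σ_j max(X_{ij}, X_{i'j}) > 0, equals the weighted Jaccard similarity J(κ_{i·}, κ_{i'·}). -/

import Mathlib

open MeasureTheory ProbabilityTheory
open scoped Classical

/-- Core conditioning lemma: for i.i.d. draws `W k` and nested measurable events
`SB ⊆ SA` with probabilities `b ≤ a`, the conditional expectation of the ratio of
counts equals `b / a`. -/
theorem aux_core {N : ℕ} [NeZero N] {Ω : Type*} [MeasurableSpace Ω]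
    (μ : Measure Ω) [IsProbabilityMeasure μ]
    {E : Type*} [MeasurableSpace E] (W : Fin N → Ω → E) (hmeas : ∀ k, Measurable (W k))
    (hindep : iIndepFun W μ)
    (SA SB : Set E) (hSA : MeasurableSet SA) (hSB : MeasurableSet SB) (hsub : SB ⊆ SA)
    (a b : ℝ) (ha : 0 < a) (hb : 0 ≤ b)
    (hA : ∀ k, μ (W k ⁻¹' SA) = ENNReal.ofReal a)
    (hB : ∀ k, μ (W k ⁻¹' SB) = ENNReal.ofReal b) :
    (∫ ω in {ω | 0 < (Finset.univ.filter (fun k => W k ω ∈ SA)).card},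
        (((Finset.univ.filter (fun k => W k ω ∈ SB)).card : ℕ) : ℝ) /
          (((Finset.univ.filter (fun k => W k ω ∈ SA)).card : ℕ) : ℝ) ∂μ) /
      (μ {ω | 0 < (Finset.univ.filter (fun k => W k ω ∈ SA)).card}).toReal
    = b / a := by
  classical
  set cntA : Ω → ℕ := fun ω => (Finset.univ.filter (fun k => W k ω ∈ SA)).card with hcntA
  set cntB : Ω → ℕ := fun ω => (Finset.univ.filter (fun k => W k ω ∈ SB)).card with hcntB
  set ind : Set E → Fin N → Ω → ℝ := fun S k ω => if W k ω ∈ S then 1 else 0 with hind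
  have hind_meas : ∀ (S : Set E), MeasurableSet S → ∀ k, Measurable (ind S k) := by
    intro S hS k
    exact Measurable.ite ((hmeas k) hS) measurable_const measurable_const
  have hind_nonneg : ∀ S k ω, 0 ≤ ind S k ω := by
    intro S k ω; simp only [hind]; split <;> norm_num
  have hind_le_one : ∀ S k ω, ind S k ω ≤ 1 := by
    intro S k ω; simp only [hind]; split <;> norm_num
  have hind_int : ∀ (S : Set E), MeasurableSet S → ∀ k,
      ∫ ω, ind S k ω ∂μ = (μ (W k ⁻¹' S)).toReal := by
    intro S hS k
    have h1 : (fun ω => ind S k ω)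
        = fun ω => Set.indicator (W k ⁻¹' S) (fun _ => (1:ℝ)) ω := by
      funext ω
      simp [hind, Set.indicator_apply, Set.mem_preimage]
    rw [h1, integral_indicator_const (1:ℝ) ((hmeas k) hS)]
    simp
    rfl
  have hcast : ∀ (S : Set E) ω,
      (((Finset.univ.filter (fun k => W k ω ∈ S)).card : ℕ) : ℝ) = ∑ k, ind S k ω := by
    intro S ω
    rw [Finset.card_filter]
    push_cast
    rfl
  have hcntA_meas : Measurable cntA := by
    have h1 : cntA = fun ω => ∑ k, if W k ω ∈ SA then 1 else 0 := by
      funext ω; rw [hcntA]; exact Finset.card_filter _ _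
    rw [h1]
    exact Finset.measurable_sum _ (fun k _ =>
      Measurable.ite ((hmeas k) hSA) measurable_const measurable_const)
  have hs0 : MeasurableSet {ω | 0 < cntA ω} :=
    measurableSet_lt measurable_const hcntA_meas
  set f : Ω → ℝ := fun ω => if 0 < cntA ω then ((cntA ω : ℝ))⁻¹ else 0 with hf
  have hf_meas : Measurable f :=
    Measurable.ite hs0 ((measurable_of_countable (fun n : ℕ => ((n:ℝ))⁻¹)).comp hcntA_meas)
      measurable_const
  have hf_nonneg : ∀ ω, 0 ≤ f ω := by
    intro ω; rw [hf]; dsimp only; split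
    · positivity
    · exact le_rfl
  have hf_le_one : ∀ ω, f ω ≤ 1 := by
    intro ω; rw [hf]; dsimp only; split
    · rename_i h
      have h1 : (1:ℝ) ≤ (cntA ω : ℝ) := by exact_mod_cast h
      rw [inv_le_one_iff₀]
      right; exact h1
    · norm_num
  set g : Fin N → Ω → ℝ :=
    fun k ω => (1 + ∑ l ∈ Finset.univ.erase k, ind SA l ω)⁻¹ with hg
  have hg_meas : ∀ k, Measurable (g k) := by
    intro k
    exact Measurable.inv (measurable_const.add
      (Finset.measurable_sum _ (fun l _ => hind_meas SA hSA l)))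
  have hg_bound : ∀ k ω, 0 < g k ω ∧ g k ω ≤ 1 := by
    intro k ω
    have hsum : 0 ≤ ∑ l ∈ Finset.univ.erase k, ind SA l ω :=
      Finset.sum_nonneg (fun l _ => hind_nonneg SA l ω)
    constructor
    · rw [hg]; dsimp only; positivity
    · rw [hg]; dsimp only
      rw [inv_le_one_iff₀]
      right; linarith
  have hInt : ∀ (h : Ω → ℝ), Measurable h → (∀ ω, |h ω| ≤ 1) → Integrable h μ := by
    intro h hh hb
    exact (integrable_const (1:ℝ)).mono' hh.aestronglyMeasurable
      (Filter.Eventually.of_forall (fun ω => by rw [Real.norm_eq_abs]; exact hb ω))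
  -- pointwise: ind S k * f = ind S k * g k  for S ⊆ SA
  have hpt : ∀ (S : Set E), S ⊆ SA → ∀ k ω, ind S k ω * f ω = ind S k ω * g k ω := by
    intro S hsubS k ω
    by_cases hw : W k ω ∈ S
    · have hwA : W k ω ∈ SA := hsubS hw
      have h1 : (cntA ω : ℝ) = 1 + ∑ l ∈ Finset.univ.erase k, ind SA l ω := by
        rw [hcast SA ω, ← Finset.add_sum_erase _ _ (Finset.mem_univ k)]
        congr 1
        simp [hind, hwA]
      have hpos : 0 < cntA ω :=
        Finset.card_pos.mpr ⟨k, Finset.mem_filter.mpr ⟨Finset.mem_univ k, hwA⟩⟩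
      have h2 : f ω = g k ω := by
        rw [hf, hg]; dsimp only
        rw [if_pos hpos, h1]
      rw [h2]
    · simp only [hind, if_neg hw, zero_mul]
  -- independence: ind S k ⟂ g k
  have hindepk : ∀ (S : Set E), MeasurableSet S → ∀ k, IndepFun (ind S k) (g k) μ := by
    intro S hS k
    have hdisj : Disjoint ({k} : Finset (Fin N)) (Finset.univ.erase k) :=
      Finset.disjoint_singleton_left.mpr (Finset.notMem_erase k _)
    have base := hindep.indepFun_finset {k} (Finset.univ.erase k) hdisj hmeas
    set φ : (({k} : Finset (Fin N)) → E) → ℝ :=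
      fun w => if w ⟨k, Finset.mem_singleton_self k⟩ ∈ S then 1 else 0 with hφ
    set ψ : (↥(Finset.univ.erase k) → E) → ℝ :=
      fun w => (1 + ∑ l : ↥(Finset.univ.erase k),
        if w l ∈ SA then (1:ℝ) else 0)⁻¹ with hψ
    have hφm : Measurable φ :=
      Measurable.ite ((measurable_pi_apply _) hS) measurable_const measurable_const
    have hψm : Measurable ψ :=
      Measurable.inv (measurable_const.add (Finset.measurable_sum _
        (fun l _ => Measurable.ite ((measurable_pi_apply l) hSA)
          measurable_const measurable_const)))
    have hcomp := base.comp hφm hψm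
    have h1 : (φ ∘ fun ω (l : ({k} : Finset (Fin N))) => W l ω) = ind S k := by
      funext ω; rfl
    have h2 : (ψ ∘ fun ω (l : ↥(Finset.univ.erase k)) => W l ω) = g k := by
      funext ω
      show (1 + ∑ l : ↥(Finset.univ.erase k),
        if W (↑l) ω ∈ SA then (1:ℝ) else 0)⁻¹ = g k ω
      rw [hg]; dsimp only
      congr 1
      congr 1
      exact Finset.sum_coe_sort (Finset.univ.erase k) (fun l => ind SA l ω)
    rw [h1, h2] at hcomp
    exact hcomp
  -- key per-k identity
  have hkey : ∀ (S : Set E), MeasurableSet S → S ⊆ SA → ∀ k,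
      ∫ ω, ind S k ω * f ω ∂μ = (μ (W k ⁻¹' S)).toReal * ∫ ω, g k ω ∂μ := by
    intro S hS hsubS k
    have h1 : ∫ ω, ind S k ω * f ω ∂μ = ∫ ω, ind S k ω * g k ω ∂μ := by
      apply integral_congr_ae
      exact Filter.Eventually.of_forall (hpt S hsubS k)
    rw [h1, (hindepk S hS k).integral_fun_mul_eq_mul_integral (hind_meas S hS k).aestronglyMeasurable
      (hg_meas k).aestronglyMeasurable, hind_int S hS k]
  -- total count identities
  set Q : ℝ := ∑ k, ∫ ω, g k ω ∂μ with hQ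
  have hIntTerm : ∀ (S : Set E), MeasurableSet S → ∀ k,
      Integrable (fun ω => ind S k ω * f ω) μ := by
    intro S hS k
    apply hInt _ ((hind_meas S hS k).mul hf_meas)
    intro ω
    rw [Pi.mul_apply, abs_of_nonneg (mul_nonneg (hind_nonneg S k ω) (hf_nonneg ω))]
    calc ind S k ω * f ω ≤ 1 * 1 :=
          mul_le_mul (hind_le_one S k ω) (hf_le_one ω) (hf_nonneg ω) zero_le_one
      _ = 1 := by norm_num
  have hsplit : ∀ (S : Set E), MeasurableSet S → S ⊆ SA → (∀ k, μ (W k ⁻¹' S) = ENNReal.ofReal (if S = SB then b else a)) → True := fun _ _ _ _ => trivial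
  have hsum_int : ∀ (S : Set E), MeasurableSet S → S ⊆ SA → (r : ℝ) → 0 ≤ r →
      (∀ k, μ (W k ⁻¹' S) = ENNReal.ofReal r) →
      ∫ ω, (((Finset.univ.filter (fun k => W k ω ∈ S)).card : ℕ) : ℝ) * f ω ∂μ = r * Q := by
    intro S hS hsubS r hr hlawS
    have h1 : (fun ω => (((Finset.univ.filter (fun k => W k ω ∈ S)).card : ℕ) : ℝ) * f ω)
        = fun ω => ∑ k, ind S k ω * f ω := by
      funext ω
      rw [hcast S ω, Finset.sum_mul]
    rw [h1, integral_finset_sum _ (fun k _ => hIntTerm S hS k)]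
    rw [hQ, Finset.mul_sum]
    refine Finset.sum_congr rfl (fun k _ => ?_)
    rw [hkey S hS hsubS k, hlawS k, ENNReal.toReal_ofReal hr]
  have hBQ := hsum_int SB hSB hsub b hb hB
  have hAQ := hsum_int SA hSA subset_rfl a ha.le hA
  -- A-side equals the measure of the conditioning event
  have hAP : ∫ ω, ((cntA ω : ℕ) : ℝ) * f ω ∂μ = (μ {ω | 0 < cntA ω}).toReal := by
    have h1 : (fun ω => ((cntA ω : ℕ) : ℝ) * f ω)
        = fun ω => Set.indicator {ω | 0 < cntA ω} (fun _ => (1:ℝ)) ω := by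
      funext ω
      by_cases h : 0 < cntA ω
      · have hA0 : ((cntA ω : ℕ) : ℝ) ≠ 0 := by
          exact_mod_cast Nat.pos_iff_ne_zero.mp h
        have hmem : ω ∈ {ω | 0 < cntA ω} := h
        rw [Set.indicator_of_mem hmem, hf]
        dsimp only
        rw [if_pos h, mul_inv_cancel₀ hA0]
      · have hmem : ω ∉ {ω | 0 < cntA ω} := h
        rw [Set.indicator_of_notMem hmem, hf]
        dsimp only
        rw [if_neg h, mul_zero]
    rw [h1, integral_indicator_const (1:ℝ) hs0, smul_eq_mul, mul_one]
    rfl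
  -- positivity of the conditioning probability
  have hk0 : ∃ k0 : Fin N, True := ⟨⟨0, Nat.pos_of_ne_zero (NeZero.ne N)⟩, trivial⟩
  obtain ⟨k0, -⟩ := hk0
  have hsubset0 : W k0 ⁻¹' SA ⊆ {ω | 0 < cntA ω} := by
    intro ω hω
    exact Finset.card_pos.mpr ⟨k0, Finset.mem_filter.mpr ⟨Finset.mem_univ k0, hω⟩⟩
  have hPpos : 0 < (μ {ω | 0 < cntA ω}).toReal := by
    apply ENNReal.toReal_pos _ (measure_ne_top μ _)
    have h1 : (0:ENNReal) < ENNReal.ofReal a := ENNReal.ofReal_pos.mpr ha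
    have h2 : μ (W k0 ⁻¹' SA) ≤ μ {ω | 0 < cntA ω} := measure_mono hsubset0
    rw [hA k0] at h2
    exact (lt_of_lt_of_le h1 h2).ne'
  -- rewrite the set integral
  have hnum : ∫ ω in {ω | 0 < cntA ω}, ((cntB ω : ℕ) : ℝ) / ((cntA ω : ℕ) : ℝ) ∂μ
      = ∫ ω, ((cntB ω : ℕ) : ℝ) * f ω ∂μ := by
    rw [← integral_indicator hs0]
    apply integral_congr_ae
    apply Filter.Eventually.of_forall
    intro ω
    by_cases h : 0 < cntA ω
    · have hmem : ω ∈ {ω | 0 < cntA ω} := h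
      rw [Set.indicator_of_mem hmem, hf]
      dsimp only
      rw [if_pos h, div_eq_mul_inv]
    · have hmem : ω ∉ {ω | 0 < cntA ω} := h
      rw [Set.indicator_of_notMem hmem, hf]
      dsimp only
      rw [if_neg h, mul_zero]
  rw [hnum, hBQ]
  have hPA : a * Q = (μ {ω | 0 < cntA ω}).toReal := by rw [← hAQ, hAP]
  have hQpos : 0 < Q := by
    have h1 : 0 < a * Q := by rw [hPA]; exact hPpos
    nlinarith
  rw [← hPA, mul_comm b Q, mul_comm a Q, mul_div_mul_left _ _ hQpos.ne']

theorem coo_epoch_expected_jaccard {n m N : ℕ} [NeZero n] [NeZero N]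
    (κ : Fin n → Fin m → ℝ) (hκ : ∀ i j, 0 ≤ κ i j)
    (M : Fin m → ℝ)
    (hM : ∀ j, M j = Finset.univ.sup' Finset.univ_nonempty (fun i => κ i j))
    (hMpos : ∀ j, 0 < M j)
    {Ω : Type*} [MeasurableSpace Ω] (μ : Measure Ω) [IsProbabilityMeasure μ]
    (W : Fin N → Ω → Fin m × ℝ) (hmeas : ∀ k, Measurable (W k))
    (hindep : iIndepFun W μ)
    (hlaw : ∀ k, μ.map (W k) =
      (∑ j, ENNReal.ofReal (M j / ∑ h, M h) • Measure.dirac j).prod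
        (volume.restrict (Set.Icc (0:ℝ) 1)))
    (i i' : Fin n) (hpair : 0 < ∑ j, max (κ i j) (κ i' j))
    (X : Fin n → Fin m → Ω → ℕ)
    (hX : ∀ a j ω, X a j ω =
      (Finset.univ.filter (fun k => (W k ω).1 = j ∧ κ a j ≥ (W k ω).2 * M j)).card) :
    (∫ ω in {ω | 0 < ∑ j, max (X i j ω) (X i' j ω)},
        ((∑ j, min (X i j ω) (X i' j ω) : ℕ) : ℝ) /
          ((∑ j, max (X i j ω) (X i' j ω) : ℕ) : ℝ) ∂μ) /
      (μ {ω | 0 < ∑ j, max (X i j ω) (X i' j ω)}).toReal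
    = (∑ j, min (κ i j) (κ i' j)) / (∑ j, max (κ i j) (κ i' j)) := by
  -- abbreviations
  set c : Fin m → ℝ := fun j => max (κ i j) (κ i' j) with hc
  set d : Fin m → ℝ := fun j => min (κ i j) (κ i' j) with hd
  have hcM : ∀ j, c j ≤ M j := by
    intro j
    rw [hM j]
    exact max_le (Finset.le_sup' (fun a => κ a j) (Finset.mem_univ i)) (Finset.le_sup' (fun a => κ a j) (Finset.mem_univ i'))
  have hdc : ∀ j, d j ≤ c j := fun j => min_le_max
  have hd0 : ∀ j, 0 ≤ d j := fun j => le_min (hκ i j) (hκ i' j)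
  have hc0 : ∀ j, 0 ≤ c j := fun j => le_trans (hd0 j) (hdc j)
  have hMs : 0 < ∑ h, M h := by
    calc (0:ℝ) < ∑ j, c j := hpair
    _ ≤ ∑ h, M h := Finset.sum_le_sum (fun j _ => hcM j)
  -- the two events
  set SA : Set (Fin m × ℝ) := {p | p.2 * M p.1 ≤ c p.1} with hSAdef
  set SB : Set (Fin m × ℝ) := {p | p.2 * M p.1 ≤ d p.1} with hSBdef
  have hmeasSet : ∀ (e : Fin m → ℝ), MeasurableSet {p : Fin m × ℝ | p.2 * M p.1 ≤ e p.1} := by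
    intro e
    exact measurableSet_le (measurable_snd.mul (measurable_of_countable M |>.comp measurable_fst))
      ((measurable_of_countable e).comp measurable_fst)
  -- count rewriting
  have hcount : ∀ (a' : Fin n) (e : Fin m → ℝ), (∀ j, e j = κ a' j ∨ ∃ a'', e j = κ a'' j) → True := fun _ _ _ => trivial
  have hfiber : ∀ (e : Fin m → ℝ) ω,
      (Finset.univ.filter (fun k => W k ω ∈ {p : Fin m × ℝ | p.2 * M p.1 ≤ e p.1})).card
        = ∑ j, (Finset.univ.filter (fun k =>
            (W k ω).1 = j ∧ (W k ω).2 * M j ≤ e j)).card := by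
    intro e ω
    rw [Finset.card_eq_sum_card_fiberwise
      (f := fun k => (W k ω).1) (t := Finset.univ) (fun x _ => Finset.mem_univ _)]
    refine Finset.sum_congr rfl (fun j _ => ?_)
    rw [Finset.filter_filter]
    congr 1
    ext k
    simp only [Finset.mem_filter, Finset.mem_univ, true_and, Set.mem_setOf_eq]
    constructor
    · rintro ⟨h1, h2⟩
      exact ⟨h2, h2 ▸ h1⟩
    · rintro ⟨h1, h2⟩
      refine ⟨?_, h1⟩
      rw [h1]; exact h2
  have hmax : ∀ ω, (∑ j, max (X i j ω) (X i' j ω))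
      = (Finset.univ.filter (fun k => W k ω ∈ SA)).card := by
    intro ω
    have h1 : (Finset.univ.filter (fun k => W k ω ∈ SA)).card
        = ∑ j, (Finset.univ.filter (fun k =>
            (W k ω).1 = j ∧ (W k ω).2 * M j ≤ c j)).card := hfiber c ω
    rw [h1]
    refine Finset.sum_congr rfl (fun j _ => ?_)
    rcases le_total (κ i j) (κ i' j) with h | h
    · have hsub : (Finset.univ.filter (fun k => (W k ω).1 = j ∧ κ i j ≥ (W k ω).2 * M j))
          ⊆ (Finset.univ.filter (fun k => (W k ω).1 = j ∧ κ i' j ≥ (W k ω).2 * M j)) :=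
        Finset.monotone_filter_right _ (fun k _ hk => ⟨hk.1, le_trans hk.2 h⟩)
      rw [hX, hX, max_eq_right (Finset.card_le_card hsub)]
      congr 1
      ext k
      simp only [ge_iff_le, hc, max_eq_right h]
    · have hsub : (Finset.univ.filter (fun k => (W k ω).1 = j ∧ κ i' j ≥ (W k ω).2 * M j))
          ⊆ (Finset.univ.filter (fun k => (W k ω).1 = j ∧ κ i j ≥ (W k ω).2 * M j)) :=
        Finset.monotone_filter_right _ (fun k _ hk => ⟨hk.1, le_trans hk.2 h⟩)
      rw [hX, hX, max_eq_left (Finset.card_le_card hsub)]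
      congr 1
      ext k
      simp only [ge_iff_le, hc, max_eq_left h]
  have hmin : ∀ ω, (∑ j, min (X i j ω) (X i' j ω))
      = (Finset.univ.filter (fun k => W k ω ∈ SB)).card := by
    intro ω
    have h1 : (Finset.univ.filter (fun k => W k ω ∈ SB)).card
        = ∑ j, (Finset.univ.filter (fun k =>
            (W k ω).1 = j ∧ (W k ω).2 * M j ≤ d j)).card := hfiber d ω
    rw [h1]
    refine Finset.sum_congr rfl (fun j _ => ?_)
    rcases le_total (κ i j) (κ i' j) with h | h
    · have hsub : (Finset.univ.filter (fun k => (W k ω).1 = j ∧ κ i j ≥ (W k ω).2 * M j))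
          ⊆ (Finset.univ.filter (fun k => (W k ω).1 = j ∧ κ i' j ≥ (W k ω).2 * M j)) :=
        Finset.monotone_filter_right _ (fun k _ hk => ⟨hk.1, le_trans hk.2 h⟩)
      rw [hX, hX, min_eq_left (Finset.card_le_card hsub)]
      congr 1
      ext k
      simp only [ge_iff_le, hd, min_eq_left h]
    · have hsub : (Finset.univ.filter (fun k => (W k ω).1 = j ∧ κ i' j ≥ (W k ω).2 * M j))
          ⊆ (Finset.univ.filter (fun k => (W k ω).1 = j ∧ κ i j ≥ (W k ω).2 * M j)) :=
        Finset.monotone_filter_right _ (fun k _ hk => ⟨hk.1, le_trans hk.2 h⟩)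
      rw [hX, hX, min_eq_right (Finset.card_le_card hsub)]
      congr 1
      ext k
      simp only [ge_iff_le, hd, min_eq_right h]
  -- probabilities of the events
  have hprob : ∀ (e : Fin m → ℝ), (∀ j, 0 ≤ e j) → (∀ j, e j ≤ M j) → ∀ k,
      μ (W k ⁻¹' {p : Fin m × ℝ | p.2 * M p.1 ≤ e p.1})
        = ENNReal.ofReal ((∑ j, e j) / ∑ h, M h) := by
    intro e he0 heM k
    rw [← Measure.map_apply (hmeas k) (hmeasSet e), hlaw k,
      Measure.prod_apply (hmeasSet e)]
    have hpre : ∀ x : Fin m, Prod.mk x ⁻¹' {p : Fin m × ℝ | p.2 * M p.1 ≤ e p.1}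
        = Set.Iic (e x / M x) := by
      intro x
      ext u
      simp only [Set.mem_preimage, Set.mem_setOf_eq, Set.mem_Iic]
      rw [le_div_iff₀ (hMpos x)]
    have hres : ∀ x : Fin m, (volume.restrict (Set.Icc (0:ℝ) 1)) (Set.Iic (e x / M x))
        = ENNReal.ofReal (e x / M x) := by
      intro x
      have ht0 : 0 ≤ e x / M x := div_nonneg (he0 x) (hMpos x).le
      have ht1 : e x / M x ≤ 1 := (div_le_one (hMpos x)).mpr (heM x)
      rw [Measure.restrict_apply measurableSet_Iic]
      have : Set.Iic (e x / M x) ∩ Set.Icc (0:ℝ) 1 = Set.Icc 0 (e x / M x) := by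
        ext u
        simp only [Set.mem_inter_iff, Set.mem_Iic, Set.mem_Icc]
        constructor
        · rintro ⟨h1, h2, h3⟩; exact ⟨h2, h1⟩
        · rintro ⟨h1, h2⟩; exact ⟨h2, h1, le_trans h2 ht1⟩
      rw [this, Real.volume_Icc, sub_zero]
    simp only [hpre]
    rw [lintegral_finset_sum_measure]
    have hterm : ∀ x : Fin m,
        ∫⁻ (u : Fin m), (volume.restrict (Set.Icc (0:ℝ) 1)) (Set.Iic (e u / M u))
          ∂(ENNReal.ofReal (M x / ∑ h, M h) • Measure.dirac x)
        = ENNReal.ofReal (e x / ∑ h, M h) := by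
      intro x
      rw [lintegral_smul_measure, lintegral_dirac, smul_eq_mul, hres x,
        ← ENNReal.ofReal_mul (div_nonneg (hMpos x).le hMs.le)]
      congr 1
      have hx : M x ≠ 0 := (hMpos x).ne'
      have hs : (∑ h, M h) ≠ 0 := hMs.ne'
      field_simp
    simp only [hterm]
    rw [← ENNReal.ofReal_sum_of_nonneg (fun j _ => div_nonneg (he0 j) hMs.le)]
    congr 1
    rw [Finset.sum_div]
  -- rewrite the goal
  have hsetrw : {ω | 0 < ∑ j, max (X i j ω) (X i' j ω)}
      = {ω | 0 < (Finset.univ.filter (fun k => W k ω ∈ SA)).card} := by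
    ext ω; simp only [Set.mem_setOf_eq, hmax ω]
  rw [hsetrw]
  have hintrw : (∫ ω in {ω | 0 < (Finset.univ.filter (fun k => W k ω ∈ SA)).card},
        ((∑ j, min (X i j ω) (X i' j ω) : ℕ) : ℝ) /
          ((∑ j, max (X i j ω) (X i' j ω) : ℕ) : ℝ) ∂μ)
      = ∫ ω in {ω | 0 < (Finset.univ.filter (fun k => W k ω ∈ SA)).card},
        (((Finset.univ.filter (fun k => W k ω ∈ SB)).card : ℕ) : ℝ) /
          (((Finset.univ.filter (fun k => W k ω ∈ SA)).card : ℕ) : ℝ) ∂μ := by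
    apply integral_congr_ae
    filter_upwards with ω
    rw [hmax ω, hmin ω]
  rw [hintrw]
  have key := aux_core μ W hmeas hindep SA SB (hmeasSet c) (hmeasSet d)
    (fun p hp => le_trans hp (hdc p.1))
    ((∑ j, c j) / ∑ h, M h) ((∑ j, d j) / ∑ h, M h)
    (div_pos hpair hMs) (div_nonneg (Finset.sum_nonneg fun j _ => hd0 j) hMs.le)
    (hprob c hc0 hcM) (hprob d hd0 (fun j => le_trans (hdc j) (hcM j)))
  rw [key]
  rw [div_div_div_cancel_right₀ (ne_of_gt hMs)]
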